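/- Soundness and completeness of the unified axiomatizations: for each Z ∈ {RT, FT, R, F} and all closed BCCSP processes p and q, LGO_I(p) ≤^{l(Z)} LGO_I(q) if and only if p ≼ q is derivable from the axiom system {B1, B2, B3, B4, (RS), (ND^Z)}; here ≤^{l(RT)} is set inclusion LGO_I(p) ⊆ LGO_I(q), ≤^{l(FT)} = ≤^{l⊇}, ≤^{l(R)} = ≤^{lf}, and ≤^{l(F)} = ≤^{lf⊇}. -/

import Mathlib

/-- BCCSP processes over a set `Act` of actions. -/
inductive Proc (Act : Type) : Type where
  | nil : Proc Act
  | pre : Act → Proc Act → Proc Act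
  | choice : Proc Act → Proc Act → Proc Act

/-- The transition relation of BCCSP. -/
inductive Proc.Step {Act : Type} : Proc Act → Act → Proc Act → Prop where
  | pre (a : Act) (p : Proc Act) : Proc.Step (Proc.pre a p) a p
  | left {p p' : Proc Act} {a : Act} (q : Proc Act) :
      Proc.Step p a p' → Proc.Step (Proc.choice p q) a p'
  | right (p : Proc Act) {q q' : Proc Act} {a : Act} :
      Proc.Step q a q' → Proc.Step (Proc.choice p q) a q'

/-- The initial offer of a process. -/
def Proc.initials {Act : Type} (p : Proc Act) : Set Act :=
  {a | ∃ p', Proc.Step p a p'}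

/-- A linear general observation `l₀ a₁ l₁ … aₙ lₙ` is encoded as the pair of
its initial label `l₀` and the list `[(a₁,l₁),…,(aₙ,lₙ)]`. -/
abbrev LObs (Act Λ : Type) : Type := Λ × List (Act × Λ)

/-- Membership `o ∈ LGO_L(p)`: `⟨L(p)⟩ ∈ LGO_L(p)`, and
`⟨L(p), a⟩ ∘ t ∈ LGO_L(p)` whenever `p →a p'` and `t ∈ LGO_L(p')`. -/
inductive InLGO {Act Λ : Type} (L : Proc Act → Λ) : LObs Act Λ → Proc Act → Prop where
  | nil (p : Proc Act) : InLGO L (L p, []) p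
  | cons {p p' : Proc Act} {a : Act} {t : LObs Act Λ} :
      Proc.Step p a p' → InLGO L t p' → InLGO L (L p, (a, t.1) :: t.2) p

/-- The sequence of actions `a₁ … aₙ` of a linear observation. -/
def obsActs {Act Λ : Type} (o : LObs Act Λ) : List Act := o.2.map Prod.fst

/-- The final local observation `lₙ` of a linear observation. -/
def obsFinal {Act Λ : Type} (o : LObs Act Λ) : Λ := (o.2.map Prod.snd).getLastD o.1

/-- Ground inequational derivability from an axiom system `E`:
reflexivity, transitivity, and congruence w.r.t. prefix and choice. -/
inductive Deriv {Act : Type} (E : Proc Act → Proc Act → Prop) :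
    Proc Act → Proc Act → Prop where
  | ax {p q : Proc Act} : E p q → Deriv E p q
  | refl (p : Proc Act) : Deriv E p p
  | trans {p q r : Proc Act} : Deriv E p q → Deriv E q r → Deriv E p r
  | pre (a : Act) {p q : Proc Act} : Deriv E p q → Deriv E (Proc.pre a p) (Proc.pre a q)
  | add {p q p' q' : Proc Act} : Deriv E p q → Deriv E p' q' →
      Deriv E (Proc.choice p p') (Proc.choice q q')

/-- The axioms B1–B4 (as pairs of inequations) together with the
ready-simulation axiom (RS): `p ≼ p + q` whenever `I(p) = I(q)`. -/
inductive BaseAx {Act : Type} : Proc Act → Proc Act → Prop where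
  | B1 (p q : Proc Act) : BaseAx (Proc.choice p q) (Proc.choice q p)
  | B2l (p q r : Proc Act) :
      BaseAx (Proc.choice (Proc.choice p q) r) (Proc.choice p (Proc.choice q r))
  | B2r (p q r : Proc Act) :
      BaseAx (Proc.choice p (Proc.choice q r)) (Proc.choice (Proc.choice p q) r)
  | B3l (p : Proc Act) : BaseAx (Proc.choice p p) p
  | B3r (p : Proc Act) : BaseAx p (Proc.choice p p)
  | B4l (p : Proc Act) : BaseAx (Proc.choice p Proc.nil) p
  | B4r (p : Proc Act) : BaseAx p (Proc.choice p Proc.nil)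
  | RS (p q : Proc Act) : Proc.initials p = Proc.initials q →
      BaseAx p (Proc.choice p q)

/-- The scheme (ND): `a(p + q) ≼ ap + a(q + r)` whenever `M(p, q, r)`. -/
def NDax {Act : Type} (M : Proc Act → Proc Act → Proc Act → Prop) :
    Proc Act → Proc Act → Prop := fun s t =>
  ∃ (a : Act) (p q r : Proc Act), M p q r ∧
    s = Proc.pre a (Proc.choice p q) ∧
    t = Proc.choice (Proc.pre a p) (Proc.pre a (Proc.choice q r))

/-- The constraint for failures. -/
def M_F {Act : Type} : Proc Act → Proc Act → Proc Act → Prop := fun _ _ _ => True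

/-- The constraint for readiness. -/
def M_R {Act : Type} : Proc Act → Proc Act → Proc Act → Prop := fun p q _ =>
  Proc.initials q ⊆ Proc.initials p

/-- The constraint for failure traces. -/
def M_FT {Act : Type} : Proc Act → Proc Act → Proc Act → Prop := fun _ q r =>
  Proc.initials r ⊆ Proc.initials q

/-- The constraint for ready traces. -/
def M_RT {Act : Type} : Proc Act → Proc Act → Proc Act → Prop := fun p q r =>
  Proc.initials p = Proc.initials q ∧ Proc.initials r ⊆ Proc.initials q

/-- The pointwise order on linear observations over `Set Act`:
same action sequence and `Xᵢ ⊇ Yᵢ` at every position. -/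
def obsGe {Act : Type} (o o' : LObs Act (Set Act)) : Prop :=
  o'.1 ⊆ o.1 ∧ List.Forall₂ (fun x y => x.1 = y.1 ∧ y.2 ⊆ x.2) o.2 o'.2

namespace S14
open Proc
variable {Act : Type}

def depth : Proc Act → Nat
  | .nil => 0
  | .pre _ p => depth p + 1
  | .choice p q => max (depth p) (depth q)

def sumP : List (Proc Act) → Proc Act
  | [] => .nil
  | p :: l => .choice p (sumP l)

def summands : Proc Act → List (Act × Proc Act)
  | .nil => []
  | .pre a p => [(a, p)]
  | .choice p q => summands p ++ summands q

lemma step_iff_summand {p : Proc Act} {a : Act} {p' : Proc Act} :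
    Step p a p' ↔ (a, p') ∈ summands p := by
  constructor
  · intro h; induction h <;> simp [summands, *]
  · intro h
    induction p with
    | nil => simp [summands] at h
    | pre b q => simp [summands] at h; obtain ⟨rfl, rfl⟩ := h; exact .pre _ _
    | choice p q ihp ihq =>
      simp [summands] at h
      rcases h with h | h
      exacts [.left _ (ihp h), .right _ (ihq h)]

lemma mem_initials_iff {p : Proc Act} {a : Act} :
    a ∈ initials p ↔ ∃ p', (a, p') ∈ summands p := by
  constructor
  · rintro ⟨p', h⟩; exact ⟨p', step_iff_summand.mp h⟩
  · rintro ⟨p', h⟩; exact ⟨p', step_iff_summand.mpr h⟩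

lemma mem_initials_of_summand {p : Proc Act} {a : Act} {p' : Proc Act}
    (h : (a, p') ∈ summands p) : a ∈ initials p := mem_initials_iff.mpr ⟨p', h⟩

lemma initials_nil : initials (.nil : Proc Act) = ∅ := by
  ext a; constructor
  · rintro ⟨p', h⟩; cases h
  · intro h; cases h

lemma initials_pre (a : Act) (p : Proc Act) : initials (pre a p) = {a} := by
  ext b; constructor
  · rintro ⟨p', h⟩; cases h; rfl
  · rintro rfl; exact ⟨p, .pre _ _⟩

lemma initials_choice (p q : Proc Act) :
    initials (choice p q) = initials p ∪ initials q := by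
  ext a; constructor
  · rintro ⟨p', h⟩
    cases h with
    | left _ h => exact Or.inl ⟨_, h⟩
    | right _ h => exact Or.inr ⟨_, h⟩
  · rintro (⟨p', h⟩ | ⟨p', h⟩)
    exacts [⟨p', .left _ h⟩, ⟨p', .right _ h⟩]

lemma depth_summand {p : Proc Act} {a : Act} {p' : Proc Act}
    (h : (a, p') ∈ summands p) : depth p' < depth p := by
  induction p with
  | nil => simp [summands] at h
  | pre b q => simp [summands] at h; obtain ⟨rfl, rfl⟩ := h; simp [depth]
  | choice p q ihp ihq =>
    simp [summands] at h
    rcases h with h | h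
    · exact lt_of_lt_of_le (ihp h) (le_max_left _ _) |>.trans_le (le_of_eq rfl)
    · exact lt_of_lt_of_le (ihq h) (le_max_right _ _)

lemma initials_empty_summands {p : Proc Act} (h : initials p = ∅) : summands p = [] := by
  cases hs : summands p with
  | nil => rfl
  | cons x l =>
    exfalso
    have : x.1 ∈ initials p := mem_initials_of_summand (by rw [hs]; exact List.mem_cons_self)
    simp [h] at this

end S14
namespace S14
open Proc
variable {Act : Type}

abbrev In (o : LObs Act (Set Act)) (p : Proc Act) : Prop := InLGO Proc.initials o p

lemma In_fst {o : LObs Act (Set Act)} {p : Proc Act} (h : In o p) : o.1 = initials p := by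
  cases h <;> rfl

lemma In_nil (p : Proc Act) : In (initials p, []) p := InLGO.nil p

lemma In_cons {p p' : Proc Act} {a : Act} {l : Set Act} {t : List (Act × Set Act)}
    (hs : Step p a p') (h : In (l, t) p') : In (initials p, (a, l) :: t) p := by
  have := InLGO.cons (L := Proc.initials) hs h
  simpa using this

lemma In_elim {o : LObs Act (Set Act)} {p : Proc Act} (h : In o p) :
    o = (initials p, []) ∨
      ∃ (a : Act) (p' : Proc Act) (t : LObs Act (Set Act)), Step p a p' ∧ In t p' ∧
        o = (initials p, (a, t.1) :: t.2) := by
  cases h with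
  | nil => exact Or.inl rfl
  | cons hs ht => exact Or.inr ⟨_, _, _, hs, ht, rfl⟩

lemma In_nil_elim {X : Set Act} {p : Proc Act} (h : In (X, []) p) : X = initials p := by
  rcases In_elim h with h' | ⟨a, p2, t, _, _, h'⟩
  · exact congrArg Prod.fst h'
  · exact absurd (congrArg Prod.snd h') (by simp)

lemma In_cons_elim {X : Set Act} {a : Act} {l : Set Act} {t : List (Act × Set Act)}
    {p : Proc Act} (h : In (X, (a, l) :: t) p) :
    X = initials p ∧ ∃ p', Step p a p' ∧ In (l, t) p' := by
  rcases In_elim h with h' | ⟨b, p', u, hs, hu, h'⟩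
  · exact absurd (congrArg Prod.snd h') (by simp)
  · have h1 : X = initials p := congrArg Prod.fst h'
    have h2 : (a, l) :: t = (b, u.1) :: u.2 := congrArg Prod.snd h'
    simp only [List.cons.injEq, Prod.mk.injEq] at h2
    obtain ⟨⟨rfl, hl⟩, ht⟩ := h2
    refine ⟨h1, p', hs, ?_⟩
    have : u = (l, t) := by cases u; simp at hl ht; simp [hl, ht]
    rwa [← this]

lemma obsFinal_nil (X : Set Act) : obsFinal ((X, []) : LObs Act (Set Act)) = X := rfl

lemma obsFinal_cons (X l : Set Act) (a : Act) (t : List (Act × Set Act)) :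
    obsFinal ((X, (a, l) :: t) : LObs Act (Set Act)) = obsFinal ((l, t) : LObs Act (Set Act)) := by
  simp only [obsFinal, List.map_cons]
  exact List.getLastD_cons

lemma obsActs_cons (X l : Set Act) (a : Act) (t : List (Act × Set Act)) :
    obsActs ((X, (a, l) :: t) : LObs Act (Set Act)) = a :: obsActs ((l, t) : LObs Act (Set Act)) := rfl

end S14
namespace S14
open Proc
variable {Act : Type}

inductive K | rt | ft | r | f
open K

/-- matching relation on observations, per semantics -/
def mt : K → LObs Act (Set Act) → LObs Act (Set Act) → Prop
  | rt => fun o o' => o' = o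
  | ft => fun o o' => obsGe o o'
  | r => fun o o' => obsActs o' = obsActs o ∧ obsFinal o' = obsFinal o
  | f => fun o o' => obsActs o' = obsActs o ∧ obsFinal o' ⊆ obsFinal o

/-- relation between corresponding non-final labels (q-side first) -/
def hdc : K → Set Act → Set Act → Prop
  | rt => fun Y X => Y = X
  | ft => fun Y X => Y ⊆ X
  | r => fun _ _ => True
  | f => fun _ _ => True

/-- relation between final labels (q-side first) -/
def fin : K → Set Act → Set Act → Prop
  | rt => fun Y X => Y = X
  | ft => fun Y X => Y ⊆ X
  | r => fun Y X => Y = X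
  | f => fun Y X => Y ⊆ X

def Mz : K → Proc Act → Proc Act → Proc Act → Prop
  | rt => M_RT
  | ft => M_FT
  | r => M_R
  | f => M_F

def Ez (z : K) : Proc Act → Proc Act → Prop := fun s t => BaseAx s t ∨ NDax (Mz z) s t

def sem (z : K) (p q : Proc Act) : Prop :=
  ∀ o, In o p → ∃ o', In o' q ∧ mt z o o'

lemma obsGe_refl (o : LObs Act (Set Act)) : obsGe o o :=
  ⟨le_refl _, List.forall₂_same.mpr fun x _ => ⟨rfl, le_refl _⟩⟩

lemma mt_refl (z : K) (o : LObs Act (Set Act)) : mt z o o := by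
  cases z <;> simp [mt, obsGe_refl]

lemma mt_acts {z : K} {o o' : LObs Act (Set Act)} (h : mt z o o') :
    obsActs o' = obsActs o := by
  obtain ⟨X, l⟩ := o; obtain ⟨Y, m⟩ := o'
  cases z with
  | rt => rw [h]
  | ft =>
    obtain ⟨-, h2⟩ := h
    simp only [obsActs]
    have h2' : List.Forall₂ (fun x y => x.1 = y.1 ∧ y.2 ⊆ x.2) l m := h2
    clear h2
    induction h2' with
    | nil => rfl
    | cons h _ ih => simp_all
  | r => exact h.1
  | f => exact h.1

lemma fin_refl (z : K) (X : Set Act) : fin z X X := by cases z <;> simp [fin]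

lemma hdc_refl (z : K) (X : Set Act) : hdc z X X := by cases z <;> simp [hdc]

lemma hdc_of_fin {z : K} {Y X : Set Act} (h : fin z Y X) : hdc z Y X := by
  cases z <;> simp [hdc, fin] at * <;> assumption

lemma fin_inter {z : K} {Y X : Set Act} (h : fin z Y X) : Y ∩ X = Y := by
  cases z <;> simp [fin] at h
  · rw [h]; exact Set.inter_self X
  · exact Set.inter_eq_self_of_subset_left h
  · rw [h]; exact Set.inter_self X
  · exact Set.inter_eq_self_of_subset_left h

lemma fin_union {z : K} {Y X Y' X' : Set Act} (h : fin z Y X) (h' : fin z Y' X') :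
    fin z (Y ∪ Y') (X ∪ X') := by
  cases z with
  | rt => show Y ∪ Y' = X ∪ X'; rw [show Y = X from h, show Y' = X' from h']
  | ft => exact Set.union_subset_union h h'
  | r => show Y ∪ Y' = X ∪ X'; rw [show Y = X from h, show Y' = X' from h']
  | f => exact Set.union_subset_union h h'

lemma hdc_union {z : K} {Y X Y' X' : Set Act} (h : hdc z Y X) (h' : hdc z Y' X') :
    hdc z (Y ∪ Y') (X ∪ X') := by
  cases z with
  | rt => show Y ∪ Y' = X ∪ X'; rw [show Y = X from h, show Y' = X' from h']
  | ft => exact Set.union_subset_union h h'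
  | r => trivial
  | f => trivial

lemma mt_nil_elim {z : K} {X : Set Act} {o' : LObs Act (Set Act)}
    (h : mt z (X, []) o') : ∃ Y, o' = (Y, []) ∧ fin z Y X := by
  have hacts : obsActs o' = ([] : List Act) := mt_acts h
  obtain ⟨Y, l⟩ := o'
  simp only [obsActs, List.map_eq_nil_iff] at hacts
  subst hacts
  refine ⟨Y, rfl, ?_⟩
  cases z with
  | rt => cases h; exact fin_refl _ _
  | ft => exact h.1
  | r => exact h.2
  | f => exact h.2

lemma mt_nil_intro {z : K} {X Y : Set Act} (h : fin z Y X) :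
    mt z ((X, []) : LObs Act (Set Act)) (Y, []) := by
  cases z with
  | rt => simp [fin] at h; simp [mt, h]
  | ft => exact ⟨h, List.Forall₂.nil⟩
  | r => exact ⟨rfl, h⟩
  | f => exact ⟨rfl, h⟩

lemma mt_cons_elim {z : K} {X l : Set Act} {a : Act} {t : List (Act × Set Act)}
    {o' : LObs Act (Set Act)} (h : mt z (X, (a, l) :: t) o') :
    ∃ Y l' t', o' = (Y, (a, l') :: t') ∧ mt z ((l, t) : LObs Act (Set Act)) (l', t') ∧ hdc z Y X := by
  have hacts := mt_acts h
  obtain ⟨Y, m⟩ := o'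
  simp only [obsActs, List.map_cons] at hacts
  obtain ⟨x, t', rfl, hx, ht'⟩ : ∃ x t', m = x :: t' ∧ x.1 = a ∧ t'.map Prod.fst = t.map Prod.fst := by
    cases m with
    | nil => simp at hacts
    | cons x t' => simp at hacts; exact ⟨x, t', rfl, hacts.1, hacts.2⟩
  obtain ⟨b, l'⟩ := x
  subst hx
  refine ⟨Y, l', t', rfl, ?_, ?_⟩
  · cases z with
    | rt =>
      cases h
      exact mt_refl _ _
    | ft =>
      obtain ⟨-, h2⟩ := h
      cases h2 with
      | cons hx ht => exact ⟨hx.2, ht⟩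
    | r =>
      refine ⟨?_, ?_⟩
      · simpa [obsActs] using ht'
      · have := h.2
        rwa [obsFinal_cons, obsFinal_cons] at this
    | f =>
      refine ⟨?_, ?_⟩
      · simpa [obsActs] using ht'
      · have := h.2
        rwa [obsFinal_cons, obsFinal_cons] at this
  · cases z with
    | rt => cases h; exact hdc_refl _ _
    | ft => exact h.1
    | r => trivial
    | f => trivial

lemma mt_cons_intro {z : K} {X Y l l' : Set Act} {a : Act}
    {t t' : List (Act × Set Act)}
    (h : mt z ((l, t) : LObs Act (Set Act)) (l', t')) (hY : hdc z Y X) :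
    mt z ((X, (a, l) :: t) : LObs Act (Set Act)) (Y, (a, l') :: t') := by
  cases z with
  | rt =>
    cases h; simp [hdc] at hY; simp [mt, hY]
  | ft =>
    exact ⟨hY, List.Forall₂.cons ⟨rfl, h.1⟩ h.2⟩
  | r =>
    refine ⟨?_, ?_⟩
    · simp [obsActs] at h ⊢; exact h.1
    · rw [obsFinal_cons, obsFinal_cons]; exact h.2
  | f =>
    refine ⟨?_, ?_⟩
    · simp [obsActs] at h ⊢; exact h.1
    · rw [obsFinal_cons, obsFinal_cons]; exact h.2

lemma fa2_trans {α : Type} {P : α → α → Prop} (hP : ∀ a b c, P a b → P b c → P a c) :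
    ∀ {l1 l2 l3 : List α}, List.Forall₂ P l1 l2 → List.Forall₂ P l2 l3 →
      List.Forall₂ P l1 l3 := by
  intro l1 l2 l3 h12 h23
  induction h12 generalizing l3 with
  | nil => cases h23; exact .nil
  | cons h t ih => cases h23 with | cons h' t' => exact .cons (hP _ _ _ h h') (ih t')

lemma mt_trans {z : K} {o o' o'' : LObs Act (Set Act)}
    (h : mt z o o') (h' : mt z o' o'') : mt z o o'' := by
  cases z with
  | rt => rw [h'] at *; exact h
  | ft =>
    refine ⟨h'.1.trans h.1, ?_⟩
    exact fa2_trans (fun a b c hab hbc => ⟨hab.1.trans hbc.1, hbc.2.trans hab.2⟩) h.2 h'.2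
  | r => exact ⟨h'.1.trans h.1, h'.2.trans h.2⟩
  | f => exact ⟨h'.1.trans h.1, h'.2.trans h.2⟩

end S14
namespace S14
open Proc
variable {Act : Type} {E : Proc Act → Proc Act → Prop}

section Toolkit
variable (hB : ∀ {s t : Proc Act}, BaseAx s t → E s t)

/-- derivable equality -/
def DE (p q : Proc Act) : Prop := Deriv E p q ∧ Deriv E q p

lemma DE.refl (p : Proc Act) : DE (E := E) p p := ⟨.refl p, .refl p⟩

lemma DE.symm {p q : Proc Act} (h : DE (E := E) p q) : DE (E := E) q p := ⟨h.2, h.1⟩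

lemma DE.trans {p q r : Proc Act} (h : DE (E := E) p q) (h' : DE (E := E) q r) :
    DE (E := E) p r := ⟨h.1.trans h'.1, h'.2.trans h.2⟩

lemma DE.add {p q p' q' : Proc Act} (h : DE (E := E) p q) (h' : DE (E := E) p' q') :
    DE (E := E) (choice p p') (choice q q') := ⟨h.1.add h'.1, h.2.add h'.2⟩

lemma DE.pre (a : Act) {p q : Proc Act} (h : DE (E := E) p q) :
    DE (E := E) (pre a p) (pre a q) := ⟨h.1.pre a, h.2.pre a⟩

include hB

lemma de_comm (p q : Proc Act) : DE (E := E) (choice p q) (choice q p) :=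
  ⟨.ax (hB (.B1 p q)), .ax (hB (.B1 q p))⟩

lemma de_assoc (p q r : Proc Act) :
    DE (E := E) (choice (choice p q) r) (choice p (choice q r)) :=
  ⟨.ax (hB (.B2l p q r)), .ax (hB (.B2r p q r))⟩

lemma de_idem (p : Proc Act) : DE (E := E) (choice p p) p :=
  ⟨.ax (hB (.B3l p)), .ax (hB (.B3r p))⟩

lemma de_nil_r (p : Proc Act) : DE (E := E) (choice p .nil) p :=
  ⟨.ax (hB (.B4l p)), .ax (hB (.B4r p))⟩

lemma de_nil_l (p : Proc Act) : DE (E := E) (choice .nil p) p :=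
  (de_comm hB _ _).trans (de_nil_r hB p)

lemma d_rs {p q : Proc Act} (h : initials p = initials q) :
    Deriv E p (choice p q) := .ax (hB (.RS p q h))

lemma sumP_append (l l' : List (Proc Act)) :
    DE (E := E) (sumP (l ++ l')) (choice (sumP l) (sumP l')) := by
  induction l with
  | nil => exact (de_nil_l hB _).symm
  | cons s l ih =>
    exact ((DE.refl s).add ih).trans (de_assoc hB _ _ _).symm

lemma sumP_perm {l l' : List (Proc Act)} (h : l.Perm l') :
    DE (E := E) (sumP l) (sumP l') := by
  induction h with
  | nil => exact DE.refl _
  | cons x _ ih => exact (DE.refl x).add ih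
  | swap x y l =>
    exact ((de_assoc hB _ _ _).symm.trans
      (((de_comm hB y x).add (DE.refl _)))).trans (de_assoc hB _ _ _)
  | trans _ _ ih1 ih2 => exact ih1.trans ih2

lemma mem_absorb {s : Proc Act} {l : List (Proc Act)} (h : s ∈ l) :
    DE (E := E) (sumP (s :: l)) (sumP l) := by
  obtain ⟨l₁, l₂, rfl⟩ := List.append_of_mem h
  have hperm : (s :: (l₁ ++ s :: l₂)).Perm (s :: s :: (l₁ ++ l₂)) := by
    refine List.Perm.cons s ?_
    simpa using List.perm_middle
  refine (sumP_perm hB hperm).trans ?_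
  refine DE.trans ?_ (sumP_perm hB (l := s :: (l₁ ++ l₂)) (by simpa using List.perm_middle.symm))
  exact ((de_assoc hB s s _).symm.trans ((de_idem hB s).add (DE.refl _)))

lemma subset_absorb {l' l : List (Proc Act)} (h : ∀ x ∈ l', x ∈ l) :
    DE (E := E) (sumP (l' ++ l)) (sumP l) := by
  induction l' with
  | nil => exact DE.refl _
  | cons s l'' ih =>
    have h1 : DE (E := E) (sumP (s :: (l'' ++ l))) (sumP (s :: l)) :=
      (DE.refl s).add (ih (fun x hx => h x (List.mem_cons_of_mem _ hx)))
    exact h1.trans (mem_absorb hB (h s (List.mem_cons_self)))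

lemma sumP_set_eq {l l' : List (Proc Act)} (h : ∀ x ∈ l, x ∈ l') (h' : ∀ x ∈ l', x ∈ l) :
    DE (E := E) (sumP l) (sumP l') := by
  refine DE.trans (DE.symm ?_) (DE.trans (sumP_perm hB (List.perm_append_comm (l₁ := l') (l₂ := l))) ?_)
  · exact subset_absorb hB h'
  · exact subset_absorb hB h

lemma proc_sum (p : Proc Act) :
    DE (E := E) p (sumP ((summands p).map (fun x => pre x.1 x.2))) := by
  induction p with
  | nil => exact DE.refl _
  | pre a p => exact (de_nil_r hB _).symm
  | choice p q ihp ihq =>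
    refine (ihp.add ihq).trans ?_
    refine DE.symm ?_
    simpa [summands] using (sumP_append hB ((summands p).map (fun x => pre x.1 x.2))
      ((summands q).map (fun x => pre x.1 x.2)))

lemma sumP_pointwise {l l' : List (Proc Act)}
    (h : List.Forall₂ (fun s t => Deriv E s t) l l') :
    Deriv E (sumP l) (sumP l') := by
  induction h with
  | nil => exact .refl _
  | cons h _ ih => exact h.add ih

lemma sumP_flatten {α : Type} (l : List α) (f : α → List (Proc Act)) :
    DE (E := E) (sumP (l.map (fun x => sumP (f x)))) (sumP (l.flatMap f)) := by
  induction l with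
  | nil => exact DE.refl _
  | cons x l ih =>
    refine DE.trans ((DE.refl _).add ih) ?_
    exact (sumP_append hB (f x) (l.flatMap f)).symm

lemma initials_sumP (l : List (Proc Act)) {a : Act} :
    a ∈ initials (sumP l) ↔ ∃ s ∈ l, a ∈ initials s := by
  clear hB
  induction l with
  | nil => simp [sumP, initials_nil]
  | cons s l ih => simp [sumP, initials_choice, ih]

end Toolkit
end S14
namespace S14
open Proc
variable {Act : Type}

lemma In_choice_left {X : Set Act} {l : List (Act × Set Act)} {p q : Proc Act}
    (h : In (X, l) p) : In (initials p ∪ initials q, l) (choice p q) := by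
  rcases In_elim h with h' | ⟨a, p₁, t, hs, ht, h'⟩
  · obtain ⟨-, rfl⟩ := Prod.mk.injEq .. ▸ h'
    have := In_nil (choice p q)
    rwa [initials_choice] at this
  · simp only [Prod.mk.injEq] at h'
    obtain ⟨-, rfl⟩ := h'
    have : In (initials (choice p q), (a, t.1) :: t.2) (choice p q) := by
      obtain ⟨l₁, t₁⟩ := t
      exact In_cons (Step.left q hs) ht
    rwa [initials_choice] at this

lemma In_choice_right {X : Set Act} {l : List (Act × Set Act)} {p q : Proc Act}
    (h : In (X, l) q) : In (initials p ∪ initials q, l) (choice p q) := by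
  rcases In_elim h with h' | ⟨a, q₁, t, hs, ht, h'⟩
  · obtain ⟨-, rfl⟩ := Prod.mk.injEq .. ▸ h'
    have := In_nil (choice p q)
    rwa [initials_choice] at this
  · simp only [Prod.mk.injEq] at h'
    obtain ⟨-, rfl⟩ := h'
    have : In (initials (choice p q), (a, t.1) :: t.2) (choice p q) := by
      obtain ⟨l₁, t₁⟩ := t
      exact In_cons (Step.right p hs) ht
    rwa [initials_choice] at this

lemma LGO_ext {p q : Proc Act} (hI : initials p = initials q)
    (hS : ∀ a r, Step p a r ↔ Step q a r) {o : LObs Act (Set Act)} (h : In o p) :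
    In o q := by
  rcases In_elim h with rfl | ⟨a, p₁, t, hs, ht, rfl⟩
  · rw [hI]; exact In_nil q
  · rw [hI]
    obtain ⟨l₁, t₁⟩ := t
    exact In_cons ((hS a p₁).mp hs) ht

lemma sem_refl (z : K) (p : Proc Act) : sem z p p :=
  fun o ho => ⟨o, ho, mt_refl z o⟩

lemma sem_trans {z : K} {p q r : Proc Act} (h : sem z p q) (h' : sem z q r) :
    sem z p r := by
  intro o ho
  obtain ⟨o', ho', hm⟩ := h o ho
  obtain ⟨o'', ho'', hm'⟩ := h' o' ho'
  exact ⟨o'', ho'', mt_trans hm hm'⟩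

lemma sem_fin {z : K} {p q : Proc Act} (h : sem z p q) :
    fin z (initials q) (initials p) := by
  obtain ⟨o', ho', hm⟩ := h _ (In_nil p)
  obtain ⟨Y, rfl, hfin⟩ := mt_nil_elim hm
  rwa [In_nil_elim ho'] at hfin

lemma sem_pre {z : K} {a : Act} {p q : Proc Act} (h : sem z p q) :
    sem z (pre a p) (pre a q) := by
  intro o ho
  rcases In_elim ho with rfl | ⟨b, p₁, t, hs, ht, rfl⟩
  · refine ⟨(initials (pre a q), []), In_nil _, ?_⟩
    rw [initials_pre, initials_pre]
    exact mt_nil_intro (fin_refl z _)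
  · cases hs
    obtain ⟨o'', ho'', hm⟩ := h t ht
    obtain ⟨Y, m⟩ := o''
    refine ⟨(initials (pre a q), (a, Y) :: m), ?_, ?_⟩
    · exact In_cons (Step.pre a q) ho''
    · obtain ⟨l₁, t₁⟩ := t
      rw [initials_pre, initials_pre]
      exact mt_cons_intro hm (hdc_refl z _)

lemma sem_add {z : K} {p q p' q' : Proc Act} (h : sem z p q) (h' : sem z p' q') :
    sem z (choice p p') (choice q q') := by
  intro o ho
  have hf : fin z (initials q) (initials p) := sem_fin h
  have hf' : fin z (initials q') (initials p') := sem_fin h'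
  rcases In_elim ho with rfl | ⟨a, p₁, t, hs, ht, rfl⟩
  · refine ⟨(initials (choice q q'), []), In_nil _, ?_⟩
    rw [initials_choice, initials_choice]
    exact mt_nil_intro (fin_union hf hf')
  · cases hs with
    | left _ hs =>
      obtain ⟨l₁, t₁⟩ := t
      have hp : In (initials p, (a, l₁) :: t₁) p := In_cons hs ht
      obtain ⟨o'', ho'', hm⟩ := h _ hp
      obtain ⟨Y, l', t', rfl, hm', hhd⟩ := mt_cons_elim hm
      obtain ⟨hY, q₁, hsq, hq₁⟩ := In_cons_elim ho''
      refine ⟨(initials (choice q q'), (a, l') :: t'), ?_, ?_⟩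
      · rw [initials_choice]; exact In_choice_left (In_cons hsq hq₁)
      · rw [initials_choice, initials_choice]
        refine mt_cons_intro hm' (hdc_union ?_ (hdc_of_fin hf'))
        rwa [hY] at hhd
    | right _ hs =>
      obtain ⟨l₁, t₁⟩ := t
      have hp : In (initials p', (a, l₁) :: t₁) p' := In_cons hs ht
      obtain ⟨o'', ho'', hm⟩ := h' _ hp
      obtain ⟨Y, l', t', rfl, hm', hhd⟩ := mt_cons_elim hm
      obtain ⟨hY, q₁, hsq, hq₁⟩ := In_cons_elim ho''
      refine ⟨(initials (choice q q'), (a, l') :: t'), ?_, ?_⟩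
      · rw [initials_choice]; exact In_choice_right (In_cons hsq hq₁)
      · rw [initials_choice, initials_choice]
        refine mt_cons_intro hm' (hdc_union (hdc_of_fin hf) ?_)
        rwa [hY] at hhd

lemma sem_of_ext {z : K} {p q : Proc Act} (hI : initials p = initials q)
    (hS : ∀ a r, Step p a r ↔ Step q a r) : sem z p q :=
  fun o ho => ⟨o, LGO_ext hI hS ho, mt_refl z o⟩

lemma sound_base {z : K} {p q : Proc Act} (h : BaseAx p q) : sem z p q := by
  cases h with
  | B1 p q =>
    refine sem_of_ext ?_ ?_
    · rw [initials_choice, initials_choice, Set.union_comm]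
    · intro a r
      constructor <;> intro h <;> cases h with
      | left _ h => exact .right _ h
      | right _ h => exact .left _ h
  | B2l p q r =>
    refine sem_of_ext ?_ ?_
    · rw [initials_choice, initials_choice, initials_choice, initials_choice,
        Set.union_assoc]
    · intro a s
      constructor <;> intro h
      · cases h with
        | left _ h => cases h with
          | left _ h => exact .left _ h
          | right _ h => exact .right _ (.left _ h)
        | right _ h => exact .right _ (.right _ h)
      · cases h with
        | left _ h => exact .left _ (.left _ h)
        | right _ h => cases h with
          | left _ h => exact .left _ (.right _ h)
          | right _ h => exact .right _ h
  | B2r p q r =>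
    refine sem_of_ext ?_ ?_
    · rw [initials_choice, initials_choice, initials_choice, initials_choice,
        Set.union_assoc]
    · intro a s
      constructor <;> intro h
      · cases h with
        | left _ h => exact .left _ (.left _ h)
        | right _ h => cases h with
          | left _ h => exact .left _ (.right _ h)
          | right _ h => exact .right _ h
      · cases h with
        | left _ h => cases h with
          | left _ h => exact .left _ h
          | right _ h => exact .right _ (.left _ h)
        | right _ h => exact .right _ (.right _ h)
  | B3l p =>
    refine sem_of_ext ?_ ?_
    · rw [initials_choice, Set.union_self]
    · intro a r
      constructor <;> intro h
      · cases h with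
        | left _ h => exact h
        | right _ h => exact h
      · exact .left _ h
  | B3r p =>
    refine sem_of_ext ?_ ?_
    · rw [initials_choice, Set.union_self]
    · intro a r
      constructor <;> intro h
      · exact .left _ h
      · cases h with
        | left _ h => exact h
        | right _ h => exact h
  | B4l p =>
    refine sem_of_ext ?_ ?_
    · rw [initials_choice, initials_nil, Set.union_empty]
    · intro a r
      constructor <;> intro h
      · cases h with
        | left _ h => exact h
        | right _ h => cases h
      · exact .left _ h
  | B4r p =>
    refine sem_of_ext ?_ ?_
    · rw [initials_choice, initials_nil, Set.union_empty]
    · intro a r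
      constructor <;> intro h
      · exact .left _ h
      · cases h with
        | left _ h => exact h
        | right _ h => cases h
  | RS p q hI =>
    intro o ho
    refine ⟨o, ?_, mt_refl z o⟩
    obtain ⟨X, l⟩ := o
    have h1 : In (initials p ∪ initials q, l) (choice p q) := In_choice_left ho
    have h2 : X = initials p := In_fst ho
    rwa [← hI, Set.union_self, ← h2] at h1

lemma nd_fin {z : K} {x y r : Proc Act} (hM : Mz z x y r) :
    fin z (initials x) (initials x ∪ initials y) := by
  cases z with
  | rt => show _ = _; rw [← hM.1, Set.union_self]
  | ft => exact Set.subset_union_left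
  | r => show _ = _; rw [Set.union_eq_self_of_subset_right hM]
  | f => exact Set.subset_union_left

lemma nd_hdc {z : K} {x y r : Proc Act} (hM : Mz z x y r) :
    hdc z (initials x) (initials x ∪ initials y) := by
  cases z with
  | rt => show _ = _; rw [← hM.1, Set.union_self]
  | ft => exact Set.subset_union_left
  | r => trivial
  | f => trivial

lemma nd_hdc2 {z : K} {x y r : Proc Act} (hM : Mz z x y r) :
    hdc z (initials y ∪ initials r) (initials x ∪ initials y) := by
  cases z with
  | rt =>
    show _ = _
    rw [Set.union_eq_self_of_subset_right hM.2, ← hM.1, Set.union_self]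
  | ft =>
    rw [Set.union_eq_self_of_subset_right hM]
    exact Set.subset_union_right
  | r => trivial
  | f => trivial

lemma sound_nd {z : K} {x y r : Proc Act} {a : Act} (hM : Mz z x y r) :
    sem z (pre a (choice x y)) (choice (pre a x) (pre a (choice y r))) := by
  set t := choice (pre a x) (pre a (choice y r)) with ht
  have hIt : initials t = {a} := by
    rw [ht, initials_choice, initials_pre, initials_pre, Set.union_self]
  intro o ho
  rcases In_elim ho with rfl | ⟨b, u, t₁, hs, ht₁, rfl⟩
  · refine ⟨(initials t, []), In_nil _, ?_⟩
    rw [hIt, initials_pre]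
    exact mt_nil_intro (fin_refl z _)
  · cases hs
    rcases In_elim ht₁ with rfl | ⟨c, w, t₂, hsw, ht₂, rfl⟩
    · -- t₁ is the nil observation of (choice x y)
      refine ⟨(initials t, (a, initials x) :: []), ?_, ?_⟩
      · exact In_cons (Step.left _ (Step.pre a x)) (In_nil x)
      · rw [hIt, initials_pre, initials_choice]
        exact mt_cons_intro (mt_nil_intro (nd_fin hM)) (hdc_refl z _)
    · cases hsw with
      | left _ hsx =>
        obtain ⟨l₂, t₂'⟩ := t₂
        refine ⟨(initials t, (a, initials x) :: (c, l₂) :: t₂'), ?_, ?_⟩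
        · exact In_cons (Step.left _ (Step.pre a x)) (In_cons hsx ht₂)
        · rw [hIt, initials_pre, initials_choice]
          exact mt_cons_intro (mt_cons_intro (mt_refl z _) (nd_hdc hM)) (hdc_refl z _)
      | right _ hsy =>
        obtain ⟨l₂, t₂'⟩ := t₂
        refine ⟨(initials t, (a, initials (choice y r)) :: (c, l₂) :: t₂'), ?_, ?_⟩
        · exact In_cons (Step.right _ (Step.pre a (choice y r)))
            (In_cons (Step.left _ hsy) ht₂)
        · rw [hIt, initials_pre, initials_choice, initials_choice]
          exact mt_cons_intro (mt_cons_intro (mt_refl z _) (nd_hdc2 hM)) (hdc_refl z _)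

theorem soundness {z : K} {p q : Proc Act} (h : Deriv (Ez z) p q) : sem z p q := by
  induction h with
  | ax h =>
    rcases h with h | ⟨a, x, y, r, hM, rfl, rfl⟩
    · exact sound_base h
    · exact sound_nd hM
  | refl p => exact sem_refl z p
  | trans _ _ ih1 ih2 => exact sem_trans ih1 ih2
  | pre a _ ih => exact sem_pre ih
  | add _ _ ih1 ih2 => exact sem_add ih1 ih2

end S14
namespace S14
open Proc
attribute [local instance] Classical.propDecidable
variable {Act : Type}

/-- summands of `q'` whose action is enabled in `p'` -/
noncomputable def wl (p' q' : Proc Act) : List (Act × Proc Act) :=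
  (summands q').filter (fun x => decide (x.1 ∈ initials p'))

/-- the merged restricted copy of `q'` -/
noncomputable def W (p' q' : Proc Act) : Proc Act :=
  sumP ((wl p' q').map (fun x => pre x.1 x.2))

/-- the list of `b`-derivatives of `q'` -/
noncomputable def da (b : Act) (q' : Proc Act) : List (Proc Act) :=
  (summands q').filterMap (fun x => if x.1 = b then some x.2 else none)

lemma mem_wl {p' q' : Proc Act} {x : Act × Proc Act} :
    x ∈ wl p' q' ↔ x ∈ summands q' ∧ x.1 ∈ initials p' := by
  simp [wl]

lemma mem_da {b : Act} {q' q'' : Proc Act} :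
    q'' ∈ da b q' ↔ (b, q'') ∈ summands q' := by
  simp only [da, List.mem_filterMap]
  constructor
  · rintro ⟨⟨c, u⟩, hm, hif⟩
    by_cases h : c = b
    · subst h; simp at hif; subst hif; exact hm
    · simp [h] at hif
  · intro hm; exact ⟨(b, q''), hm, by simp⟩

lemma initials_W {E : Proc Act → Proc Act → Prop}
    (hB : ∀ {s t : Proc Act}, BaseAx s t → E s t) (p' q' : Proc Act) :
    initials (W p' q') = initials q' ∩ initials p' := by
  ext a
  rw [W, initials_sumP (E := E) hB]
  constructor
  · rintro ⟨s, hs, ha⟩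
    simp only [List.mem_map] at hs
    obtain ⟨⟨b, u⟩, hbu, rfl⟩ := hs
    rw [initials_pre] at ha
    obtain rfl : a = b := ha
    obtain ⟨h1, h2⟩ := mem_wl.mp hbu
    exact ⟨mem_initials_of_summand h1, h2⟩
  · rintro ⟨h1, h2⟩
    obtain ⟨u, hu⟩ := mem_initials_iff.mp h1
    refine ⟨pre a u, ?_, ?_⟩
    · exact List.mem_map.mpr ⟨(a, u), mem_wl.mpr ⟨hu, h2⟩, rfl⟩
    · rw [initials_pre]; rfl

lemma absorb_W {E : Proc Act → Proc Act → Prop}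
    (hB : ∀ {s t : Proc Act}, BaseAx s t → E s t) (p' q' : Proc Act) :
    DE (E := E) (Proc.choice (W p' q') q') q' := by
  refine DE.trans ((DE.refl (W p' q')).add (proc_sum hB q')) ?_
  refine DE.trans (sumP_append hB _ _).symm ?_
  refine DE.trans (subset_absorb hB ?_) (proc_sum hB q').symm
  intro x hx
  simp only [List.mem_map] at hx ⊢
  obtain ⟨y, hy, rfl⟩ := hx
  exact ⟨y, (mem_wl.mp hy).1, rfl⟩

lemma fin_inter_self {z : K} {Y X : Set Act} (h : fin z Y X) : Y ∩ X = Y := fin_inter h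

lemma chain_cond {z : K} {p' q₀ qk X : Proc Act}
    {E : Proc Act → Proc Act → Prop} (hB : ∀ {s t : Proc Act}, BaseAx s t → E s t)
    (hfin : fin z (initials q₀) (initials p'))
    (hXle : initials X ⊆ initials p')
    (hXge : initials q₀ ∩ initials p' ⊆ initials X)
    (hk : hdc z (initials qk) (initials p')) :
    Mz z X (W p' qk) qk := by
  have hW : initials (W p' qk) = initials qk ∩ initials p' := initials_W hB p' qk
  cases z with
  | rt =>
    have h0 : initials q₀ = initials p' := hfin
    have hk' : initials qk = initials p' := hk
    have hX : initials X = initials p' := by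
      apply Set.Subset.antisymm hXle
      intro a ha
      exact hXge ⟨h0 ▸ ha, ha⟩
    constructor
    · rw [hX, hW, hk', Set.inter_self]
    · rw [hW, hk', Set.inter_self]
  | ft =>
    show initials qk ⊆ initials (W p' qk)
    rw [hW]
    exact fun a ha => ⟨ha, hk ha⟩
  | r =>
    show initials (W p' qk) ⊆ initials X
    have h0 : initials q₀ = initials p' := hfin
    intro a ha
    rw [hW] at ha
    exact hXge ⟨h0 ▸ ha.2, ha.2⟩
  | f => trivial

lemma nd_deriv {z : K} {x y r : Proc Act} (a : Act) (hM : Mz z x y r) :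
    Deriv (Ez z) (pre a (Proc.choice x y))
      (Proc.choice (pre a x) (pre a (Proc.choice y r))) :=
  Deriv.ax (Or.inr ⟨a, x, y, r, hM, rfl, rfl⟩)

lemma hBz (z : K) : ∀ {s t : Proc Act}, BaseAx s t → Ez z s t := fun h => Or.inl h

/-- the ND-splitting chain -/
lemma chain (z : K) (a : Act) (p' q₀ : Proc Act)
    (hfin : fin z (initials q₀) (initials p')) :
    ∀ J : List (Proc Act), (∀ q' ∈ J, hdc z (initials q') (initials p')) →
    Deriv (Ez z) (pre a (sumP ((q₀ :: J).map (W p'))))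
      (sumP ((q₀ :: J).map (fun q' => pre a q'))) := by
  have hB : ∀ {s t : Proc Act}, BaseAx s t → Ez z s t := fun h => Or.inl h
  intro J
  induction J using List.reverseRecOn with
  | nil =>
    intro _
    have hIW : initials (W p' q₀) = initials q₀ := by
      rw [initials_W hB, fin_inter hfin]
    refine Deriv.trans ((de_nil_r hB (W p' q₀)).1.pre a) ?_
    refine Deriv.trans ((d_rs hB hIW).pre a) ?_
    refine Deriv.trans ((absorb_W hB p' q₀).1.pre a) ?_
    exact (de_nil_r hB (pre a q₀)).2
  | append_singleton J' qk ih =>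
    intro hJ
    have hJ' : ∀ q' ∈ J', hdc z (initials q') (initials p') := fun q' h =>
      hJ q' (List.mem_append_left _ h)
    have hk : hdc z (initials qk) (initials p') := hJ qk (List.mem_append_right _ (List.mem_singleton_self qk))
    set X := sumP ((q₀ :: J').map (W p')) with hX
    -- rearrange the sum
    have e1 : DE (E := Ez z) (sumP ((q₀ :: (J' ++ [qk])).map (W p')))
        (Proc.choice X (W p' qk)) := by
      have : (q₀ :: (J' ++ [qk])).map (W p') = ((q₀ :: J').map (W p')) ++ [W p' qk] := by
        simp
      rw [this]
      refine DE.trans (sumP_append hB _ _) ?_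
      exact (DE.refl X).add (de_nil_r hB (W p' qk))
    -- facts about initials of X
    have hXle : initials X ⊆ initials p' := by
      intro b hb
      rw [hX, initials_sumP (E := Ez z) hB] at hb
      obtain ⟨s, hs, hbs⟩ := hb
      simp only [List.mem_map] at hs
      obtain ⟨q', hq', rfl⟩ := hs
      rw [initials_W hB] at hbs
      exact hbs.2
    have hXge : initials q₀ ∩ initials p' ⊆ initials X := by
      intro b hb
      rw [hX, initials_sumP (E := Ez z) hB]
      refine ⟨W p' q₀, List.mem_map.mpr ⟨q₀, List.mem_cons_self, rfl⟩, ?_⟩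
      rw [initials_W hB]; exact hb
    have hM : Mz z X (W p' qk) qk := chain_cond hB hfin hXle hXge hk
    refine Deriv.trans (e1.1.pre a) ?_
    refine Deriv.trans (nd_deriv a hM) ?_
    have h2 : Deriv (Ez z) (pre a (Proc.choice (W p' qk) qk)) (pre a qk) :=
      (absorb_W hB p' qk).1.pre a
    refine Deriv.trans ((ih hJ').add h2) ?_
    have : (q₀ :: (J' ++ [qk])).map (fun q' => pre a q') =
        ((q₀ :: J').map (fun q' => pre a q')) ++ [pre a qk] := by simp
    rw [this]
    refine Deriv.trans ?_ (sumP_append hB _ _).2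
    exact ((Deriv.refl _).add (de_nil_r hB (pre a qk)).2)

end S14
namespace S14
open Proc
attribute [local instance] Classical.propDecidable
variable {Act : Type}

lemma sumP_map_pointwise {E : Proc Act → Proc Act → Prop} {α : Type}
    {l : List α} {f g : α → Proc Act} (h : ∀ x ∈ l, Deriv E (f x) (g x)) :
    Deriv E (sumP (l.map f)) (sumP (l.map g)) := by
  induction l with
  | nil => exact .refl _
  | cons x l ih =>
    exact (h x (List.mem_cons_self)).add
      (ih (fun y hy => h y (List.mem_cons_of_mem _ hy)))

lemma initials_sumP_pre {E : Proc Act → Proc Act → Prop}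
    (hB : ∀ {s t : Proc Act}, BaseAx s t → E s t)
    {l : List (Proc Act)} (hl : l ≠ []) (a : Act) :
    initials (sumP (l.map (fun q' => pre a q'))) = {a} := by
  ext b
  rw [initials_sumP (E := E) hB]
  constructor
  · rintro ⟨s, hs, hb⟩
    obtain ⟨q', hq', rfl⟩ := List.mem_map.mp hs
    rwa [initials_pre] at hb
  · rintro rfl
    obtain ⟨q', hq'⟩ := List.exists_mem_of_ne_nil l hl
    exact ⟨pre b q', List.mem_map.mpr ⟨q', hq', rfl⟩, by rw [initials_pre]; rfl⟩

lemma fin_empty {z : K} {Y : Set Act} (h : fin z Y ∅) : Y = ∅ := by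
  cases z with
  | rt => exact h
  | ft => exact Set.subset_empty_iff.mp h
  | r => exact h
  | f => exact Set.subset_empty_iff.mp h

theorem key (z : K) :
    ∀ n : ℕ, ∀ p' : Proc Act, depth p' ≤ n → ∀ (a : Act) (Q : List (Proc Act)),
      (∀ o, In o p' → ∃ q' ∈ Q, ∃ o', In o' q' ∧ mt z o o') →
      Deriv (Ez z) (pre a p') (sumP (Q.map (fun q' => pre a q'))) := by
  have hB : ∀ {s t : Proc Act}, BaseAx s t → Ez z s t := fun h => Or.inl h
  intro n
  induction n using Nat.strong_induction_on with
  | _ n ih =>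
  intro p' hd a Q cov
  -- the witness for the nil observation
  obtain ⟨q₀, hq₀Q, o', ho', hm⟩ := cov _ (In_nil p')
  obtain ⟨Y, rfl, hfin0⟩ := mt_nil_elim hm
  have hfin : fin z (initials q₀) (initials p') := by
    rwa [In_nil_elim ho'] at hfin0
  -- the list of compatible members of Q
  set J := Q.filter (fun q' => decide (hdc z (initials q') (initials p'))) with hJdef
  have hJ : ∀ q' ∈ J, hdc z (initials q') (initials p') := by
    intro q' hq'
    have := (List.mem_filter.mp hq').2
    exact of_decide_eq_true this
  set L := q₀ :: J with hLdef
  have hLQ : ∀ q' ∈ L, q' ∈ Q := by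
    intro q' hq'
    rcases List.mem_cons.mp hq' with rfl | hq'
    · exact hq₀Q
    · exact (List.mem_filter.mp hq').1
  have covL : ∀ o, In o p' → ∃ q' ∈ L, ∃ o', In o' q' ∧ mt z o o' := by
    intro o ho
    obtain ⟨q', hq', o', ho', hm⟩ := cov o ho
    have hc : hdc z (initials q') (initials p') := by
      obtain ⟨X, l⟩ := o
      have hX : X = initials p' := In_fst ho
      cases l with
      | nil =>
        obtain ⟨Y', rfl, hfin'⟩ := mt_nil_elim hm
        have : Y' = initials q' := In_nil_elim ho'
        subst this; subst hX
        exact hdc_of_fin hfin'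
      | cons x t =>
        obtain ⟨b, lb⟩ := x
        obtain ⟨Y', l', t', rfl, -, hhd⟩ := mt_cons_elim hm
        have : Y' = initials q' := In_fst ho'
        subst this; subst hX
        exact hhd
    refine ⟨q', ?_, o', ho', hm⟩
    exact List.mem_cons_of_mem q₀ (List.mem_filter.mpr ⟨hq', decide_eq_true hc⟩)
  -- replace each summand of p' by the merged derivatives of L
  have hsum : ∀ x ∈ summands p', Deriv (Ez z) (pre x.1 x.2)
      (sumP ((L.flatMap (da x.1)).map (fun q'' => pre x.1 q''))) := by
    rintro ⟨b, p''⟩ hx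
    have hdep : depth p'' < n := lt_of_lt_of_le (depth_summand hx) hd
    refine ih (depth p'') hdep p'' le_rfl b _ ?_
    intro o₁ ho₁
    obtain ⟨X₁, l₁⟩ := o₁
    have hstep : Step p' b p'' := step_iff_summand.mpr hx
    have hlift : In (initials p', (b, X₁) :: l₁) p' := by
      have hX₁ : X₁ = initials p'' := In_fst ho₁
      exact In_cons hstep ho₁
    obtain ⟨q', hq'L, o'', ho'', hm'⟩ := covL _ hlift
    obtain ⟨Y', l', t', rfl, hm'', hhd⟩ := mt_cons_elim hm'
    obtain ⟨hY', q₁, hsq, hq₁⟩ := In_cons_elim ho''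
    refine ⟨q₁, ?_, (l', t'), hq₁, hm''⟩
    exact List.mem_flatMap.mpr ⟨q', hq'L, mem_da.mpr (step_iff_summand.mp hsq)⟩
  have h5 : Deriv (Ez z) p'
      (sumP ((summands p').map (fun x =>
        sumP ((L.flatMap (da x.1)).map (fun q'' => pre x.1 q''))))) := by
    refine (proc_sum hB p').1.trans ?_
    exact sumP_map_pointwise hsum
  have h6 : DE (E := Ez z)
      (sumP ((summands p').map (fun x =>
        sumP ((L.flatMap (da x.1)).map (fun q'' => pre x.1 q'')))))
      (sumP (L.map (W p'))) := by
    refine DE.trans (sumP_flatten hB (summands p')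
      (fun x => (L.flatMap (da x.1)).map (fun q'' => pre x.1 q''))) ?_
    have hWmap : L.map (W p') = L.map (fun x => sumP ((wl p' x).map (fun y => pre y.1 y.2))) := rfl
    rw [hWmap]
    refine DE.trans ?_ (DE.symm (sumP_flatten hB L (fun q' => (wl p' q').map (fun y => pre y.1 y.2))))
    refine sumP_set_eq hB ?_ ?_
    · intro x hx
      obtain ⟨⟨b, p''⟩, hbp, hx2⟩ := List.mem_flatMap.mp hx
      obtain ⟨q'', hq'', rfl⟩ := List.mem_map.mp hx2
      obtain ⟨q', hq'L, hda⟩ := List.mem_flatMap.mp hq''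
      refine List.mem_flatMap.mpr ⟨q', hq'L, ?_⟩
      refine List.mem_map.mpr ⟨(b, q''), ?_, rfl⟩
      exact mem_wl.mpr ⟨mem_da.mp hda, mem_initials_of_summand hbp⟩
    · intro x hx
      obtain ⟨q', hq'L, hx2⟩ := List.mem_flatMap.mp hx
      obtain ⟨⟨b, q''⟩, hbq, rfl⟩ := List.mem_map.mp hx2
      obtain ⟨hsumq, hbI⟩ := mem_wl.mp hbq
      obtain ⟨p'', hp''⟩ := mem_initials_iff.mp hbI
      refine List.mem_flatMap.mpr ⟨(b, p''), hp'', ?_⟩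
      refine List.mem_map.mpr ⟨q'', ?_, rfl⟩
      exact List.mem_flatMap.mpr ⟨q', hq'L, mem_da.mpr hsumq⟩
  have h7 : Deriv (Ez z) (pre a (sumP (L.map (W p'))))
      (sumP (L.map (fun q' => pre a q'))) := chain z a p' q₀ hfin J hJ
  have h8 : Deriv (Ez z) (sumP (L.map (fun q' => pre a q')))
      (sumP (Q.map (fun q' => pre a q'))) := by
    have hLne : L ≠ [] := List.cons_ne_nil _ _
    have hQne : Q ≠ [] := List.ne_nil_of_mem hq₀Q
    have hIL := initials_sumP_pre (E := Ez z) hB hLne a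
    have hIQ := initials_sumP_pre (E := Ez z) hB hQne a
    refine (d_rs hB (hIL.trans hIQ.symm)).trans ?_
    refine Deriv.trans (sumP_append hB (L.map (fun q' => pre a q'))
      (Q.map (fun q' => pre a q'))).2 ?_
    refine (subset_absorb hB ?_).1
    intro x hx
    obtain ⟨q', hq', rfl⟩ := List.mem_map.mp hx
    exact List.mem_map.mpr ⟨q', hLQ q' hq', rfl⟩
  exact ((h5.pre a).trans ((h6.1.pre a).trans h7)).trans h8

theorem completeness (z : K) {p q : Proc Act} (h : sem z p q) :
    Deriv (Ez z) p q := by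
  have hB : ∀ {s t : Proc Act}, BaseAx s t → Ez z s t := fun h => Or.inl h
  by_cases hemp : summands p = []
  · have hIp : initials p = ∅ := by
      ext a
      simp only [mem_initials_iff, hemp, List.not_mem_nil, Set.mem_empty_iff_false,
        iff_false, not_exists]
      intro p'; simp [hemp]
    have hIq : initials q = ∅ := fin_empty (hIp ▸ sem_fin h)
    have h1 : DE (E := Ez z) p Proc.nil := by
      have := proc_sum hB p
      rw [hemp] at this
      exact this
    have h2 : DE (E := Ez z) q Proc.nil := by
      have := proc_sum hB q
      rw [initials_empty_summands hIq] at this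
      exact this
    exact h1.1.trans h2.2
  · -- every initial action of p is matched in q
    have hstepq : ∀ x ∈ summands p, ∃ q₁, Step q x.1 q₁ := by
      rintro ⟨a, p'⟩ hx
      have hlift : In (initials p, (a, initials p') :: []) p :=
        In_cons (step_iff_summand.mpr hx) (In_nil p')
      obtain ⟨o', ho', hm⟩ := h _ hlift
      obtain ⟨Y, l', t', rfl, -, -⟩ := mt_cons_elim hm
      obtain ⟨-, q₁, hsq, -⟩ := In_cons_elim ho'
      exact ⟨q₁, hsq⟩
    -- each summand of p is below the sum of matching derivatives of q
    have hsum : ∀ x ∈ summands p, Deriv (Ez z) (pre x.1 x.2)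
        (sumP ((da x.1 q).map (fun q'' => pre x.1 q''))) := by
      rintro ⟨a, p'⟩ hx
      refine key z (depth p') p' le_rfl a _ ?_
      intro o₁ ho₁
      obtain ⟨X₁, l₁⟩ := o₁
      have hlift : In (initials p, (a, X₁) :: l₁) p :=
        In_cons (step_iff_summand.mpr hx) ho₁
      obtain ⟨o', ho', hm⟩ := h _ hlift
      obtain ⟨Y, l', t', rfl, hm', -⟩ := mt_cons_elim hm
      obtain ⟨-, q₁, hsq, hq₁⟩ := In_cons_elim ho'
      exact ⟨q₁, mem_da.mpr (step_iff_summand.mp hsq), (l', t'), hq₁, hm'⟩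
    set F := (summands p).flatMap
      (fun x => (da x.1 q).map (fun q'' => pre x.1 q'')) with hF
    have h1 : Deriv (Ez z) p (sumP F) := by
      refine ((proc_sum hB p).1.trans (sumP_map_pointwise hsum)).trans ?_
      exact (sumP_flatten hB (summands p)
        (fun x => (da x.1 q).map (fun q'' => pre x.1 q''))).1
    have hIpq : initials p ⊆ initials q := by
      intro a ha
      obtain ⟨p', hp'⟩ := mem_initials_iff.mp ha
      obtain ⟨q₁, hq₁⟩ := hstepq (a, p') hp'
      exact ⟨q₁, hq₁⟩
    have hIF : initials (sumP F) = initials q := by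
      ext b
      rw [initials_sumP (E := Ez z) hB]
      constructor
      · rintro ⟨s, hs, hb⟩
        obtain ⟨⟨c, p''⟩, hc, hs2⟩ := List.mem_flatMap.mp hs
        obtain ⟨q'', hq'', rfl⟩ := List.mem_map.mp hs2
        rw [initials_pre] at hb
        obtain rfl : b = c := hb
        exact mem_initials_of_summand (mem_da.mp hq'')
      · intro hb
        -- b ∈ I q; get b ∈ I p
        have hbp : b ∈ initials p := by
          by_contra hbp
          -- show I q ⊆ I p always
          have hqp : initials q ⊆ initials p := by
            have hf := sem_fin h
            cases z with
            | rt => exact le_of_eq hf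
            | ft => exact hf
            | r => exact le_of_eq hf
            | f => exact hf
          exact hbp (hqp hb)
        obtain ⟨p', hp'⟩ := mem_initials_iff.mp hbp
        obtain ⟨q₁, hq₁⟩ := hstepq (b, p') hp'
        refine ⟨pre b q₁, ?_, by rw [initials_pre]; rfl⟩
        refine List.mem_flatMap.mpr ⟨(b, p'), hp', ?_⟩
        exact List.mem_map.mpr ⟨q₁, mem_da.mpr (step_iff_summand.mp hq₁), rfl⟩
    have h2 : Deriv (Ez z) (sumP F) q := by
      refine (d_rs hB hIF).trans ?_
      refine Deriv.trans ((Deriv.refl _).add (proc_sum hB q).1) ?_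
      refine Deriv.trans (sumP_append hB F ((summands q).map (fun x => pre x.1 x.2))).2 ?_
      refine Deriv.trans (subset_absorb hB ?_).1 (proc_sum hB q).2
      intro x hx
      obtain ⟨⟨c, p''⟩, hc, hs2⟩ := List.mem_flatMap.mp hx
      obtain ⟨q'', hq'', rfl⟩ := List.mem_map.mp hs2
      exact List.mem_map.mpr ⟨(c, q''), mem_da.mp hq'', rfl⟩
    exact h1.trans h2

end S14
/-- soundness and completeness of the unified axiomatizations:
for each `Z ∈ {RT, FT, R, F}`, `LGO_I(p) ≤^{l(Z)} LGO_I(q)` iff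
`p ≼ q` is derivable from `{B1–B4, (RS), (ND^Z)}`. -/
theorem stmt14 {Act : Type} (p q : Proc Act) :
    ((∀ o, InLGO Proc.initials o p → InLGO Proc.initials o q) ↔
        Deriv (fun s t => BaseAx s t ∨ NDax M_RT s t) p q) ∧
    ((∀ o, InLGO Proc.initials o p →
        ∃ o', InLGO Proc.initials o' q ∧ obsGe o o') ↔
        Deriv (fun s t => BaseAx s t ∨ NDax M_FT s t) p q) ∧
    ((∀ o, InLGO Proc.initials o p →
        ∃ o', InLGO Proc.initials o' q ∧ obsActs o' = obsActs o ∧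
          obsFinal o' = obsFinal o) ↔
        Deriv (fun s t => BaseAx s t ∨ NDax M_R s t) p q) ∧
    ((∀ o, InLGO Proc.initials o p →
        ∃ o', InLGO Proc.initials o' q ∧ obsActs o' = obsActs o ∧
          obsFinal o' ⊆ obsFinal o) ↔
        Deriv (fun s t => BaseAx s t ∨ NDax M_F s t) p q) := by
  refine ⟨⟨?_, ?_⟩, ⟨?_, ?_⟩, ⟨?_, ?_⟩, ⟨?_, ?_⟩⟩
  · intro h
    exact S14.completeness S14.K.rt (fun o ho => ⟨o, h o ho, rfl⟩)
  · intro h o ho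
    obtain ⟨o', ho', hm⟩ := S14.soundness (z := S14.K.rt) h o ho
    exact hm ▸ ho'
  · intro h
    exact S14.completeness S14.K.ft h
  · intro h
    exact S14.soundness (z := S14.K.ft) h
  · intro h
    exact S14.completeness S14.K.r h
  · intro h
    exact S14.soundness (z := S14.K.r) h
  · intro h
    exact S14.completeness S14.K.f h
  · intro h
    exact S14.soundness (z := S14.K.f) h
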